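/- Let m ≥ 3 and let δ_1,...,δ_m ∈ Z^2 sum to zero. Then (1/(2^{m−2}(m−1)!))·Σ_{σ ∈ S_{m−1}} Π_{j=1}^{m−2} [δ_{σ(j+1)} ∧ Σ_{l=1}^{j} δ_{σ(l)}]_+ = (1/(m−1)!)·μ_m(δ_1,...,δ_m), where [c]_+ = q^{c/2} + q^{−c/2} and μ_m(δ_1,...,δ_m) = Σ_{ω cyclic order} q^{k(ω)/2}. -/

import Mathlib

/-- The wedge product of two integer vectors in ℤ²: the determinant of the
matrix with columns `v` and `w`. -/
def wedge (v w : ℤ × ℤ) : ℤ := v.1 * w.2 - v.2 * w.1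

open LaurentPolynomial

/-- `k(ω)` for a linear representative `σ` of a cyclic order:
`k(σ) = Σ_{2 ≤ i < j ≤ m} δ_{σ(i)} ∧ δ_{σ(j)}` (zero-indexed: `1 ≤ i < j`). -/
def kcyc {N : ℕ} (a : Fin N → ℤ × ℤ) (σ : Equiv.Perm (Fin N)) : ℤ :=
  ∑ p ∈ Finset.univ.filter (fun p : Fin N × Fin N => 1 ≤ (p.1 : ℕ) ∧ p.1 < p.2),
    wedge (a (σ p.1)) (a (σ p.2))

/-- `μ_m(δ_1,…,δ_m) = Σ_{ω ∈ Ω_m} q^{k(ω)/2}`, cyclic orders encoded by their unique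
linear representatives fixing the last position; `T c` stands for `q^{c/2}`. -/
noncomputable def mu {n : ℕ} (a : Fin (n + 1) → ℤ × ℤ) : LaurentPolynomial ℚ :=
  ∑ σ ∈ Finset.univ.filter
      (fun σ : Equiv.Perm (Fin (n + 1)) => σ (Fin.last n) = Fin.last n),
    T (kcyc a σ)

/-- For `σ ∈ S_{m-1}` (acting on the indices `1,…,m-1`, zero-indexed `Fin (n+2)` inside
`Fin (n+3)` via `castSucc`, with `m = n+3`) and `1 ≤ j ≤ m-2` (zero-indexed
`j : Fin (n+1)`), the wedge `δ_{σ(j+1)} ∧ Σ_{l=1}^{j} δ_{σ(l)}`. -/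
def cterm {n : ℕ} (δ : Fin (n + 3) → ℤ × ℤ) (σ : Equiv.Perm (Fin (n + 2)))
    (j : Fin (n + 1)) : ℤ :=
  wedge (δ (Fin.castSucc (σ j.succ)))
    (∑ l ∈ Finset.univ.filter (fun l : Fin (n + 2) => (l : ℕ) < (j : ℕ) + 1),
      δ (Fin.castSucc (σ l)))

open Finset

section psi
variable {n : ℕ}

def psiv (S : Finset (Fin (n + 1))) (r : Fin (n + 2)) : ℕ :=
  Fin.cases S.card
    (fun j => if j ∈ S then (S.filter (fun j' => j < j')).card
      else S.card + 1 + ((univ.filter (fun j' => j' ∉ S ∧ j' < j)).card)) r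

lemma psiv_zero (S : Finset (Fin (n + 1))) : psiv S 0 = S.card := rfl

lemma psiv_succ (S : Finset (Fin (n + 1))) (j : Fin (n + 1)) :
    psiv S j.succ = if j ∈ S then (S.filter (fun j' => j < j')).card
      else S.card + 1 + ((univ.filter (fun j' => j' ∉ S ∧ j' < j)).card) := by
  simp [psiv]

lemma card_S_le (S : Finset (Fin (n + 1))) : S.card ≤ n + 1 := by
  have := S.card_le_univ; simpa using this

lemma psiv_lt (S : Finset (Fin (n + 1))) (r : Fin (n + 2)) : psiv S r < n + 2 := by
  induction r using Fin.cases with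
  | zero => exact (Nat.lt_succ_of_le (card_S_le S) : S.card < n + 2)
  | succ j =>
    rw [psiv_succ]
    split_ifs with hj
    · have h1 : (S.filter (fun j' => j < j')).card ≤ S.card := card_filter_le _ _
      have := card_S_le S; omega
    · have h1 : (univ.filter (fun j' => j' ∉ S ∧ j' < j)).card <
          (univ.filter (fun j' => j' ∉ S)).card := by
        apply card_lt_card
        constructor
        · intro x hx; simp only [mem_filter, mem_univ, true_and] at hx ⊢; exact hx.1
        · intro hsub
          have := hsub (by simp [hj] : j ∈ univ.filter (fun j' => j' ∉ S))
          simp at this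
      have h2 : (univ.filter (fun j' => j' ∉ S)).card = (n + 1) - S.card := by
        have h : univ.filter (fun j' => j' ∉ S) = Sᶜ := by ext x; simp
        rw [h, card_compl]; simp
      have h3 := card_S_le S
      omega

lemma psiv_cmp (S : Finset (Fin (n + 1))) (j : Fin (n + 1)) (b : Fin (n + 2))
    (h : b < j.succ) :
    if j ∈ S then psiv S j.succ < psiv S b else psiv S b < psiv S j.succ := by
  induction b using Fin.cases with
  | zero =>
    rw [psiv_zero, psiv_succ]
    split_ifs with hj
    · apply card_lt_card
      constructor
      · exact filter_subset _ _
      · intro hsub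
        have := hsub hj
        simp at this
    · omega
  | succ j' =>
    have hj' : j' < j := by
      rw [Fin.lt_def] at h ⊢
      simpa using h
    rw [psiv_succ, psiv_succ]
    split_ifs with hj hj2 hj2
    · apply card_lt_card
      constructor
      · intro x hx
        simp only [mem_filter] at hx ⊢
        exact ⟨hx.1, lt_trans hj' hx.2⟩
      · intro hsub
        have := hsub (by simp [hj, hj'] : j ∈ S.filter (fun x => j' < x))
        simp at this
    · have h1 : (S.filter (fun j' => j < j')).card ≤ S.card := card_filter_le _ _
      omega
    · have h1 : (S.filter (fun x => j' < x)).card ≤ S.card := card_filter_le _ _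
      omega
    · have : (univ.filter (fun x => x ∉ S ∧ x < j')).card <
          (univ.filter (fun x => x ∉ S ∧ x < j)).card := by
        apply card_lt_card
        constructor
        · intro x hx
          simp only [mem_filter, mem_univ, true_and] at hx ⊢
          exact ⟨hx.1, lt_trans hx.2 hj'⟩
        · intro hsub
          have := hsub (by simp [hj2, hj'] : j' ∈ univ.filter (fun x => x ∉ S ∧ x < j))
          simp at this
      omega

def psi (S : Finset (Fin (n + 1))) (r : Fin (n + 2)) : Fin (n + 2) :=
  ⟨psiv S r, psiv_lt S r⟩

lemma psi_injective (S : Finset (Fin (n + 1))) : Function.Injective (psi S) := by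
  intro a b hab
  by_contra hne
  rcases lt_or_gt_of_ne hne with h | h
  · obtain ⟨j, rfl⟩ := Fin.eq_succ_of_ne_zero
      (Fin.pos_iff_ne_zero.mp (lt_of_le_of_lt (Fin.zero_le a) h))
    have := psiv_cmp S j a h
    have hv : psiv S a = psiv S j.succ := by
      have := congrArg Fin.val hab
      simpa [psi] using this
    split_ifs at this <;> omega
  · obtain ⟨j, rfl⟩ := Fin.eq_succ_of_ne_zero
      (Fin.pos_iff_ne_zero.mp (lt_of_le_of_lt (Fin.zero_le b) h))
    have := psiv_cmp S j b h
    have hv : psiv S j.succ = psiv S b := by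
      have := congrArg Fin.val hab
      simpa [psi] using this
    split_ifs at this <;> omega

noncomputable def psie (S : Finset (Fin (n + 1))) : Equiv.Perm (Fin (n + 2)) :=
  Equiv.ofBijective (psi S) (Finite.injective_iff_bijective.mp (psi_injective S))

lemma psie_apply (S : Finset (Fin (n + 1))) (r : Fin (n + 2)) : psie S r = psi S r := rfl

end psi

lemma wedge_antisymm (v w : ℤ × ℤ) : wedge v w = - wedge w v := by simp [wedge]; ring

lemma wedge_add_right (v a b : ℤ × ℤ) : wedge v (a + b) = wedge v a + wedge v b := by
  simp [wedge]; ring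

lemma wedge_sum_right {ι : Type*} (v : ℤ × ℤ) (s : Finset ι) (f : ι → ℤ × ℤ) :
    wedge v (∑ i ∈ s, f i) = ∑ i ∈ s, wedge v (f i) := by
  induction s using Finset.cons_induction with
  | empty => simp [wedge]
  | cons a s ha ih => simp [Finset.sum_cons, wedge_add_right, ih]

lemma wedge_sum_left {ι : Type*} (v : ℤ × ℤ) (s : Finset ι) (f : ι → ℤ × ℤ) :
    wedge (∑ i ∈ s, f i) v = ∑ i ∈ s, wedge (f i) v := by
  rw [wedge_antisymm, wedge_sum_right, ← Finset.sum_neg_distrib]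
  exact Finset.sum_congr rfl fun i _ => (wedge_antisymm _ _).symm

section main
variable {n : ℕ} (δ : Fin (n + 3) → ℤ × ℤ)

def Kf (τ : Equiv.Perm (Fin (n + 2))) : ℤ :=
  ∑ p ∈ Finset.univ.filter (fun p : Fin (n + 2) × Fin (n + 2) => p.1 < p.2),
    wedge (δ (Fin.castSucc (τ p.1))) (δ (Fin.castSucc (τ p.2)))

/-- Extension of a permutation of `Fin (n+2)` to `Fin (n+3)` fixing the last element. -/
def extPerm (τ : Equiv.Perm (Fin (n + 2))) : Equiv.Perm (Fin (n + 3)) :=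
  Equiv.permCongr finSuccEquivLast.symm τ.optionCongr

lemma extPerm_castSucc (τ : Equiv.Perm (Fin (n + 2))) (i : Fin (n + 2)) :
    extPerm τ (Fin.castSucc i) = Fin.castSucc (τ i) := by
  simp [extPerm, Equiv.permCongr_apply]

lemma extPerm_last (τ : Equiv.Perm (Fin (n + 2))) : extPerm τ (Fin.last (n + 2)) = Fin.last (n + 2) := by
  simp [extPerm, Equiv.permCongr_apply]

/-- Restriction of a permutation fixing the last element. -/
def res (σ : Equiv.Perm (Fin (n + 3))) : Equiv.Perm (Fin (n + 2)) :=
  Equiv.removeNone (Equiv.permCongr finSuccEquivLast σ)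

lemma res_extPerm (τ : Equiv.Perm (Fin (n + 2))) : res (extPerm τ) = τ := by
  have h : Equiv.permCongr finSuccEquivLast (extPerm τ) = τ.optionCongr := by
    rw [extPerm]
    ext x
    simp [Equiv.permCongr_apply]
  rw [res, h, Equiv.removeNone_optionCongr]

lemma extPerm_res (σ : Equiv.Perm (Fin (n + 3))) (hσ : σ (Fin.last (n + 2)) = Fin.last (n + 2)) :
    extPerm (res σ) = σ := by
  ext x
  induction x using Fin.lastCases with
  | last => rw [extPerm_last, hσ]
  | cast i =>
    rw [extPerm_castSucc]
    have hne : σ (Fin.castSucc i) ≠ Fin.last (n + 2) := by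
      intro h
      have := σ.injective (h.trans hσ.symm)
      exact absurd this (Fin.castSucc_lt_last i).ne
    obtain ⟨k, hk⟩ := Fin.exists_castSucc_eq.mpr hne
    have hsome : (Equiv.permCongr finSuccEquivLast σ) (some i) = some k := by
      simp [Equiv.permCongr_apply, ← hk]
    have := Equiv.removeNone_some (Equiv.permCongr finSuccEquivLast σ) ⟨k, hsome⟩
    rw [hsome] at this
    have hres : res σ i = k := Option.some_injective _ this
    rw [hres, hk]

lemma wedge_helper (v u : ℤ × ℤ) : wedge v (-u - v) = - wedge v u := by
  simp [wedge]; ring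

lemma kcyc_extPerm (hδ : ∑ i, δ i = 0) (τ : Equiv.Perm (Fin (n + 2))) :
    kcyc δ (extPerm τ) = Kf δ τ := by
  classical
  -- sum of the first n+2 entries in permuted order, omitting position 0
  have hsum : ∑ b : Fin (n + 1), δ (Fin.castSucc (τ b.succ))
      = - δ (Fin.last (n + 2)) - δ (Fin.castSucc (τ 0)) := by
    have h1 : ∑ b : Fin (n + 2), δ (Fin.castSucc (τ b))
        = ∑ b : Fin (n + 2), δ (Fin.castSucc b) :=
      Equiv.sum_comp τ (fun b => δ (Fin.castSucc b))
    have h2 : ∑ i : Fin (n + 3), δ i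
        = (∑ b : Fin (n + 2), δ (Fin.castSucc b)) + δ (Fin.last (n + 2)) :=
      Fin.sum_univ_castSucc δ
    have h3 : ∑ b : Fin (n + 2), δ (Fin.castSucc (τ b))
        = δ (Fin.castSucc (τ 0)) + ∑ b : Fin (n + 1), δ (Fin.castSucc (τ b.succ)) :=
      Fin.sum_univ_succ _
    rw [hδ] at h2
    rw [h1] at h3
    linear_combination -h2 - h3
  set v := δ (Fin.castSucc (τ 0)) with hv
  set u := δ (Fin.last (n + 2)) with hu
  have hneg1 : wedge (-u - v) u = - wedge v u := by simp [wedge]; ring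
  have hneg2 : wedge v (-u - v) = - wedge v u := by simp [wedge]; ring
  have hA2 : ∑ a : Fin (n + 2),
      (if 1 ≤ (a : ℕ) then wedge (δ (Fin.castSucc (τ a))) u else 0) = - wedge v u := by
    rw [Fin.sum_univ_succ, if_neg (by norm_num), zero_add]
    have heach : ∀ a : Fin (n + 1), (if 1 ≤ ((a.succ : Fin (n + 2)) : ℕ) then
        wedge (δ (Fin.castSucc (τ a.succ))) u else 0)
        = wedge (δ (Fin.castSucc (τ a.succ))) u := fun a => if_pos (by simp)
    rw [Finset.sum_congr rfl (fun a _ => heach a), ← wedge_sum_left, hsum, hneg1]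
  have hB0 : ∑ b : Fin (n + 2),
      (if (0 : Fin (n + 2)) < b then wedge v (δ (Fin.castSucc (τ b))) else 0)
      = - wedge v u := by
    rw [Fin.sum_univ_succ]
    simp only [lt_irrefl, if_false, Fin.succ_pos, if_true, zero_add]
    rw [← wedge_sum_right, hsum, hneg2]
  have hL : kcyc δ (extPerm τ)
      = (∑ a : Fin (n + 1), ∑ b : Fin (n + 2),
          if a.succ < b then wedge (δ (Fin.castSucc (τ a.succ))) (δ (Fin.castSucc (τ b))) else 0)
        + (- wedge v u) := by
    rw [kcyc, Finset.sum_filter, Fintype.sum_prod_type, Fin.sum_univ_castSucc]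
    have hlastzero : (∑ b : Fin (n + 3),
        if 1 ≤ ((Fin.last (n + 2) : Fin (n + 3)) : ℕ) ∧ Fin.last (n + 2) < b then
          wedge (δ (extPerm τ (Fin.last (n + 2)))) (δ (extPerm τ b)) else 0) = 0 := by
      apply Finset.sum_eq_zero
      intro b _
      rw [if_neg]
      rintro ⟨-, hb⟩
      exact absurd hb (not_lt.mpr (Fin.le_last b))
    rw [hlastzero, add_zero]
    have inner_eq : ∀ a : Fin (n + 2), (∑ b : Fin (n + 3),
        if 1 ≤ ((Fin.castSucc a : Fin (n + 3)) : ℕ) ∧ Fin.castSucc a < b then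
          wedge (δ (extPerm τ (Fin.castSucc a))) (δ (extPerm τ b)) else 0)
        = (∑ b : Fin (n + 2), if 1 ≤ (a : ℕ) ∧ a < b then
            wedge (δ (Fin.castSucc (τ a))) (δ (Fin.castSucc (τ b))) else 0)
          + (if 1 ≤ (a : ℕ) then wedge (δ (Fin.castSucc (τ a))) u else 0) := by
      intro a
      rw [Fin.sum_univ_castSucc]
      congr 1
      · apply Finset.sum_congr rfl
        intro b _
        simp only [extPerm_castSucc, Fin.coe_castSucc, Fin.castSucc_lt_castSucc_iff]
      · simp only [extPerm_castSucc, extPerm_last, Fin.coe_castSucc, Fin.castSucc_lt_last,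
          and_true, hu]
    rw [Finset.sum_congr rfl (fun a _ => inner_eq a), Finset.sum_add_distrib, hA2]
    congr 1
    rw [Fin.sum_univ_succ]
    have h0 : (∑ b : Fin (n + 2), if 1 ≤ ((0 : Fin (n + 2)) : ℕ) ∧ (0 : Fin (n + 2)) < b then
        wedge (δ (Fin.castSucc (τ 0))) (δ (Fin.castSucc (τ b))) else 0) = 0 := by
      apply Finset.sum_eq_zero
      intro b _
      rw [if_neg]
      rintro ⟨h1, -⟩
      simp at h1
    rw [h0, zero_add]
    apply Finset.sum_congr rfl
    intro a _
    apply Finset.sum_congr rfl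
    intro b _
    congr 1
    simp [Fin.val_succ]
  have hR : Kf δ τ
      = (- wedge v u) + (∑ a : Fin (n + 1), ∑ b : Fin (n + 2),
          if a.succ < b then wedge (δ (Fin.castSucc (τ a.succ))) (δ (Fin.castSucc (τ b))) else 0) := by
    rw [Kf, Finset.sum_filter, Fintype.sum_prod_type, Fin.sum_univ_succ, hB0]
  rw [hL, hR, add_comm]

lemma L1 (σ : Equiv.Perm (Fin (n + 2))) (S : Finset (Fin (n + 1))) :
    (∑ j ∈ S, cterm δ σ j) - ∑ j ∈ univ \ S, cterm δ σ j
      = Kf δ (σ * (psie S)⁻¹) := by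
  classical
  set w : Fin (n + 2) → Fin (n + 2) → ℤ :=
    fun a b => wedge (δ (Fin.castSucc (σ a))) (δ (Fin.castSucc (σ b))) with hw
  -- Step A: RHS as a sum over pairs ordered by psi
  have stepA : Kf δ (σ * (psie S)⁻¹)
      = ∑ p ∈ Finset.univ.filter
          (fun p : Fin (n + 2) × Fin (n + 2) => psi S p.1 < psi S p.2), w p.1 p.2 := by
    rw [Kf]
    apply Finset.sum_nbij' (fun p => ((psie S).symm p.1, (psie S).symm p.2))
      (fun p => (psie S p.1, psie S p.2))
    · intro p hp
      simp only [mem_filter, mem_univ, true_and] at hp ⊢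
      have h1 : psi S ((psie S).symm p.1) = p.1 := (psie S).apply_symm_apply p.1
      have h2 : psi S ((psie S).symm p.2) = p.2 := (psie S).apply_symm_apply p.2
      rw [h1, h2]; exact hp
    · intro p hp
      simp only [mem_filter, mem_univ, true_and] at hp ⊢
      exact hp
    · intro p _; simp
    · intro p _; simp
    · intro p _
      simp only [hw, Equiv.Perm.mul_apply]
      rfl
  -- Step B: LHS as signed sum over pairs (j, l)
  have stepB : (∑ j ∈ S, cterm δ σ j) - ∑ j ∈ univ \ S, cterm δ σ j
      = ∑ q ∈ (Finset.univ.filter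
          (fun q : Fin (n + 1) × Fin (n + 2) => (q.2 : ℕ) < (q.1 : ℕ) + 1)),
          (if q.1 ∈ S then w q.1.succ q.2 else - w q.1.succ q.2) := by
    have hS : univ.filter (fun j => j ∈ S) = S := by ext x; simp
    have hSc : univ.filter (fun j => ¬ j ∈ S) = univ \ S := by ext x; simp
    rw [Finset.sum_filter, Fintype.sum_prod_type]
    have : ∀ j : Fin (n + 1),
        (∑ l : Fin (n + 2), if (l : ℕ) < (j : ℕ) + 1 then
          (if j ∈ S then w j.succ l else - w j.succ l) else 0)
        = (if j ∈ S then cterm δ σ j else - cterm δ σ j) := by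
      intro j
      have hc : cterm δ σ j = ∑ l ∈ Finset.univ.filter
          (fun l : Fin (n + 2) => (l : ℕ) < (j : ℕ) + 1), w j.succ l := by
        rw [cterm, wedge_sum_right]
      rw [hc]
      rw [← Finset.sum_filter]
      split_ifs with hj
      · rfl
      · rw [← Finset.sum_neg_distrib]
    rw [Finset.sum_congr rfl (fun j _ => this j)]
    rw [Finset.sum_ite, hS, hSc, Finset.sum_neg_distrib]
    ring
  rw [stepA, stepB]
  -- Step C: bijection between the two index sets
  apply Finset.sum_bij (fun q _ => if q.1 ∈ S then (q.1.succ, q.2) else (q.2, q.1.succ))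
  · intro q hq
    simp only [mem_filter, mem_univ, true_and] at hq ⊢
    have hlt : q.2 < q.1.succ := by
      rw [Fin.lt_def]; simpa using hq
    have := psiv_cmp S q.1 q.2 hlt
    split_ifs at this ⊢ with h
    · exact this
    · exact this
  · intro a ha b hb hab
    simp only [mem_filter, mem_univ, true_and] at ha hb
    split_ifs at hab with h1 h2 h2 <;> rw [Prod.mk.injEq] at hab <;>
      obtain ⟨e1, e2⟩ := hab
    · exact Prod.ext (Fin.succ_injective _ e1) e2
    · exfalso
      have v1 := congrArg Fin.val e1
      have v2 := congrArg Fin.val e2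
      simp only [Fin.val_succ] at v1 v2
      omega
    · exfalso
      have v1 := congrArg Fin.val e1
      have v2 := congrArg Fin.val e2
      simp only [Fin.val_succ] at v1 v2
      omega
    · exact Prod.ext (Fin.succ_injective _ e2) e1
  · intro p hp
    simp only [mem_filter, mem_univ, true_and] at hp
    have hne : p.1 ≠ p.2 := by
      intro h; rw [h] at hp; exact lt_irrefl _ hp
    rcases lt_or_gt_of_ne hne with h | h
    · -- p.1 < p.2, so p.2 = j.succ with j ∉ S
      obtain ⟨j, hj⟩ := Fin.eq_succ_of_ne_zero
        (Fin.pos_iff_ne_zero.mp (lt_of_le_of_lt (Fin.zero_le p.1) h))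
      have hcmp := psiv_cmp S j p.1 (hj ▸ h)
      have hpv : psiv S p.1 < psiv S p.2 := hp
      rw [hj] at hpv
      have hjS : j ∉ S := by
        intro hmem
        rw [if_pos hmem] at hcmp
        omega
      refine ⟨(j, p.1), ?_, ?_⟩
      · simp only [mem_filter, mem_univ, true_and]
        have := hj ▸ h
        rw [Fin.lt_def] at this
        simpa using this
      · simp only [if_neg hjS]
        rw [← hj]
    · -- p.2 < p.1, so p.1 = j.succ with j ∈ S
      obtain ⟨j, hj⟩ := Fin.eq_succ_of_ne_zero
        (Fin.pos_iff_ne_zero.mp (lt_of_le_of_lt (Fin.zero_le p.2) h))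
      have hcmp := psiv_cmp S j p.2 (hj ▸ h)
      have hpv : psiv S p.1 < psiv S p.2 := hp
      rw [hj] at hpv
      have hjS : j ∈ S := by
        by_contra hmem
        rw [if_neg hmem] at hcmp
        omega
      refine ⟨(j, p.2), ?_, ?_⟩
      · simp only [mem_filter, mem_univ, true_and]
        have hlt : p.2 < j.succ := hj ▸ h
        rw [Fin.lt_def] at hlt
        simpa using hlt
      · simp only [if_pos hjS]
        rw [← hj]
  · intro q hq
    simp only [mem_filter, mem_univ, true_and] at hq
    split_ifs with hjS
    · rfl
    · simp only [hw]
      rw [wedge_antisymm, neg_neg]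

end main
section final
variable {n : ℕ} (δ : Fin (n + 3) → ℤ × ℤ)

lemma mu_eq (hδ : ∑ i, δ i = 0) :
    mu δ = ∑ τ : Equiv.Perm (Fin (n + 2)), T (Kf δ τ) := by
  rw [mu]
  apply Finset.sum_nbij' (fun σ => res σ) (fun τ => extPerm τ)
  · intro σ hσ; exact Finset.mem_univ _
  · intro τ _
    simp only [Finset.mem_filter, Finset.mem_univ, true_and]
    exact extPerm_last τ
  · intro σ hσ
    simp only [Finset.mem_filter, Finset.mem_univ, true_and] at hσ
    exact extPerm_res σ hσ
  · intro τ _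
    exact res_extPerm τ
  · intro σ hσ
    simp only [Finset.mem_filter, Finset.mem_univ, true_and] at hσ
    rw [← kcyc_extPerm δ hδ (res σ), extPerm_res σ hσ]

lemma T_sum {ι : Type*} (s : Finset ι) (f : ι → ℤ) :
    ∏ i ∈ s, (T (f i) : LaurentPolynomial ℚ) = T (∑ i ∈ s, f i) := by
  induction s using Finset.cons_induction with
  | empty => simp
  | cons a s ha ih => rw [Finset.prod_cons, Finset.sum_cons, ih, ← T_add]

end final

/-- for `m = n + 3 ≥ 3` and `δ_1,…,δ_m ∈ ℤ²` summing to zero,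
`(1/(2^{m-2}(m-1)!)) Σ_{σ ∈ S_{m-1}} Π_{j=1}^{m-2} [δ_{σ(j+1)} ∧ Σ_{l≤j} δ_{σ(l)}]_+
 = (1/(m-1)!) μ_m(δ_1,…,δ_m)`, where `[c]_+ = q^{c/2} + q^{-c/2}` in `ℚ[q^{±1/2}]`. -/
theorem stmt9 (n : ℕ) (δ : Fin (n + 3) → ℤ × ℤ) (hδ : ∑ i, δ i = 0) :
    ((2 ^ (n + 1) * (Nat.factorial (n + 2) : ℚ))⁻¹) •
        ∑ σ : Equiv.Perm (Fin (n + 2)),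
          ∏ j : Fin (n + 1),
            ((T (cterm δ σ j) + T (-(cterm δ σ j))) : LaurentPolynomial ℚ)
      = ((Nat.factorial (n + 2) : ℚ)⁻¹) • mu δ := by
  classical
  have hprod : ∀ σ : Equiv.Perm (Fin (n + 2)),
      ∏ j : Fin (n + 1), ((T (cterm δ σ j) + T (-(cterm δ σ j))) : LaurentPolynomial ℚ)
      = ∑ S ∈ (univ : Finset (Fin (n + 1))).powerset,
          T ((∑ j ∈ S, cterm δ σ j) - ∑ j ∈ univ \ S, cterm δ σ j) := by
    intro σ
    rw [Finset.prod_add]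
    apply Finset.sum_congr rfl
    intro S _
    rw [T_sum, T_sum, ← T_add]
    congr 1
    rw [Finset.sum_neg_distrib, ← sub_eq_add_neg]
  have key : (∑ σ : Equiv.Perm (Fin (n + 2)),
      ∏ j : Fin (n + 1), ((T (cterm δ σ j) + T (-(cterm δ σ j))) : LaurentPolynomial ℚ))
      = (2 ^ (n + 1) : ℕ) • mu δ := by
    rw [Finset.sum_congr rfl (fun σ _ => hprod σ), Finset.sum_comm]
    have inner : ∀ S ∈ (univ : Finset (Fin (n + 1))).powerset,
        (∑ σ : Equiv.Perm (Fin (n + 2)),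
          (T ((∑ j ∈ S, cterm δ σ j) - ∑ j ∈ univ \ S, cterm δ σ j) : LaurentPolynomial ℚ))
        = mu δ := by
      intro S _
      rw [mu_eq δ hδ]
      have h1 : ∀ σ : Equiv.Perm (Fin (n + 2)),
          (T ((∑ j ∈ S, cterm δ σ j) - ∑ j ∈ univ \ S, cterm δ σ j) : LaurentPolynomial ℚ)
          = T (Kf δ (σ * (psie S)⁻¹)) := fun σ => by rw [L1]
      rw [Finset.sum_congr rfl (fun σ _ => h1 σ)]
      exact Fintype.sum_bijective (· * (psie S)⁻¹) (Group.mulRight_bijective _)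
        _ _ (fun σ => rfl)
    rw [Finset.sum_congr rfl inner, Finset.sum_const, Finset.card_powerset, Finset.card_univ,
      Fintype.card_fin]
  rw [key, ← Nat.cast_smul_eq_nsmul ℚ, smul_smul]
  congr 1
  have h2 : ((2 : ℚ) ^ (n + 1)) ≠ 0 := by positivity
  have hF : ((Nat.factorial (n + 2) : ℚ)) ≠ 0 :=
    Nat.cast_ne_zero.mpr (Nat.factorial_ne_zero _)
  push_cast
  field_simp
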